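/- Let f be a C^1 nonnegative function on [t0, ∞) with t0 > 0 such that A := ∫_{t0}^∞ f(t) dt < ∞, and suppose f'(t) ≤ a(t) f(t) for all t ≥ t0, where a is nonnegative with B := ∫_{t0}^∞ a(t) dt < ∞. Then for all t ≥ t0, f(t) ≤ ((t0 · f(t0) + 1) · exp(A + B) − 1) / t. -/

import Mathlib

open MeasureTheory Set

/-- Deckelnick-type differential inequality lemma. -/
theorem stmt_0 (f f' a : ℝ → ℝ) (t0 A B : ℝ) (ht0 : 0 < t0)
    (hf_nonneg : ∀ t, t0 ≤ t → 0 ≤ f t)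
    (hderiv : ∀ t, t0 ≤ t → HasDerivAt f (f' t) t)
    (hf'cont : ContinuousOn f' (Ici t0))
    (hfint : IntegrableOn f (Ici t0))
    (hA : ∫ t in Ici t0, f t = A)
    (ha_nonneg : ∀ t, t0 ≤ t → 0 ≤ a t)
    (haint : IntegrableOn a (Ici t0))
    (hB : ∫ t in Ici t0, a t = B)
    (hineq : ∀ t, t0 ≤ t → f' t ≤ a t * f t) :
    ∀ t, t0 ≤ t → f t ≤ ((t0 * f t0 + 1) * Real.exp (A + B) - 1) / t := by
  intro t ht
  -- h(s) = s * f s + 1, H = log h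
  set H : ℝ → ℝ := fun s => Real.log (s * f s + 1) with hHdef
  have hpos : ∀ s, t0 ≤ s → 0 < s * f s + 1 := by
    intro s hs
    have := hf_nonneg s hs
    have hs0 : (0:ℝ) < s := lt_of_lt_of_le ht0 hs
    nlinarith
  have hfcont : ContinuousOn f (Ici t0) := fun s hs =>
    (hderiv s hs).continuousAt.continuousWithinAt
  set H' : ℝ → ℝ := fun s => (f s + s * f' s) / (s * f s + 1) with hH'def
  have hHderiv : ∀ s, t0 ≤ s → HasDerivAt H (H' s) s := by
    intro s hs
    have h1 : HasDerivAt (fun s => s * f s + 1) (1 * f s + s * f' s) s :=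
      ((hasDerivAt_id s).mul (hderiv s hs)).add_const 1
    have h2 := (Real.hasDerivAt_log (ne_of_gt (hpos s hs))).comp s h1
    simpa [hHdef, hH'def, div_eq_mul_inv, mul_comm, one_mul, Function.comp_def] using h2
  -- FTC
  have hIccIci : Icc t0 t ⊆ Ici t0 := Icc_subset_Ici_self
  have hH'cont : ContinuousOn H' (Icc t0 t) := by
    apply ContinuousOn.div
    · exact (hfcont.mono hIccIci).add
        (continuousOn_id.mul (hf'cont.mono hIccIci))
    · exact (continuousOn_id.mul (hfcont.mono hIccIci)).add continuousOn_const
    · intro s hs; exact ne_of_gt (hpos s hs.1)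
  have hftc : ∫ s in t0..t, H' s = H t - H t0 := by
    apply intervalIntegral.integral_eq_sub_of_hasDerivAt
    · intro s hs
      rw [uIcc_of_le ht] at hs
      exact hHderiv s hs.1
    · rw [intervalIntegrable_iff_integrableOn_Icc_of_le ht]
      exact hH'cont.integrableOn_compact isCompact_Icc
  have hfa_int : IntervalIntegrable (fun s => f s + a s) volume t0 t := by
    rw [intervalIntegrable_iff_integrableOn_Icc_of_le ht]
    exact (hfint.mono_set hIccIci).add (haint.mono_set hIccIci)
  have hmono : ∫ s in t0..t, H' s ≤ ∫ s in t0..t, (f s + a s) := by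
    apply intervalIntegral.integral_mono_on ht _ hfa_int
    · intro s hs
      have hs0 : (0:ℝ) < s := lt_of_lt_of_le ht0 hs.1
      have hfs := hf_nonneg s hs.1
      have has := ha_nonneg s hs.1
      have hi := hineq s hs.1
      rw [hH'def, div_le_iff₀ (hpos s hs.1)]
      nlinarith [mul_le_mul_of_nonneg_left hi hs0.le, mul_nonneg (mul_nonneg hs0.le hfs) hfs]
    · rw [intervalIntegrable_iff_integrableOn_Icc_of_le ht]
      exact hH'cont.integrableOn_compact isCompact_Icc
  have hsplit : ∫ s in t0..t, (f s + a s) ≤ A + B := by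
    rw [intervalIntegral.integral_add
        ((intervalIntegrable_iff_integrableOn_Icc_of_le ht).mpr (hfint.mono_set hIccIci))
        ((intervalIntegrable_iff_integrableOn_Icc_of_le ht).mpr (haint.mono_set hIccIci))]
    have h1 : ∫ s in t0..t, f s ≤ A := by
      rw [intervalIntegral.integral_of_le ht, ← hA]
      apply setIntegral_mono_set hfint
      · filter_upwards [ae_restrict_mem measurableSet_Ici] with s hs
        exact hf_nonneg s hs
      · exact (Ioc_subset_Icc_self.trans hIccIci).eventuallyLE
    have h2 : ∫ s in t0..t, a s ≤ B := by
      rw [intervalIntegral.integral_of_le ht, ← hB]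
      apply setIntegral_mono_set haint
      · filter_upwards [ae_restrict_mem measurableSet_Ici] with s hs
        exact ha_nonneg s hs
      · exact (Ioc_subset_Icc_self.trans hIccIci).eventuallyLE
    linarith
  have hkey : H t ≤ H t0 + (A + B) := by linarith [hftc ▸ le_trans hmono hsplit]
  -- exponentiate
  have h1 : t * f t + 1 ≤ (t0 * f t0 + 1) * Real.exp (A + B) := by
    have := Real.exp_le_exp.mpr hkey
    rw [Real.exp_add, hHdef] at this
    simp only at this
    rwa [Real.exp_log (hpos t ht), Real.exp_log (hpos t0 le_rfl)] at this
  have ht0t : (0:ℝ) < t := lt_of_lt_of_le ht0 ht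
  rw [le_div_iff₀ ht0t]
  nlinarith
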